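/- Let F be a finite field with q elements, let v ≥ 2, let r ≥ 1, and let C be a q^r-divisible set of points of PG(v−1, q). Then for every integer j with 0 ≤ j ≤ r and every F-subspace S of F^v of dimension v − j, one has |C ∩ S| ≡ |C| (mod q^{r−j}). -/

import Mathlib

open scoped Classical

section PGDefs

variable {F : Type} [Field F] {M : Type} [AddCommGroup M] [Module F M]

/-- The number of points of `C` contained in the subspace `S`, i.e. `|C ∩ S|`. -/
noncomputable def interCard (C : Finset (Submodule F M)) (S : Submodule F M) : ℕ :=
  (C.filter (fun P => P ≤ S)).card

/-- `H` is a hyperplane, i.e. a subspace of codimension 1. -/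
def IsHyperplane (H : Submodule F M) : Prop :=
  Module.finrank F ↥H = Module.finrank F M - 1

/-- Every element of `C` is a point, i.e. a 1-dimensional subspace. -/
def IsPointSet (C : Finset (Submodule F M)) : Prop :=
  ∀ P ∈ C, Module.finrank F ↥P = 1

/-- `C` is `Δ`-divisible: `|C ∩ H| ≡ |C| (mod Δ)` for every hyperplane `H`. -/
def DivisibleSet (Δ : ℕ) (C : Finset (Submodule F M)) : Prop :=
  ∀ H : Submodule F M, IsHyperplane H → interCard C H ≡ C.card [MOD Δ]

noncomputable instance fintypeSubmodule [Finite M] : Fintype (Submodule F M) :=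
  have : Finite (Submodule F M) :=
    Finite.of_injective (fun S => (S : Set M)) SetLike.coe_injective
  Fintype.ofFinite _

end PGDefs

section AuxLemmas

variable {F : Type} [Field F] {V : Type} [AddCommGroup V] [Module F V]

lemma aux_exists_ker_eq [FiniteDimensional F V]
    (H : Submodule F V) (hH : Module.finrank F ↥H = Module.finrank F V - 1)
    (hV : 1 ≤ Module.finrank F V) :
    ∃ f : V →ₗ[F] F, LinearMap.ker f = H := by
  have hquot : Module.finrank F (V ⧸ H) = 1 := by
    have h1 := H.finrank_quotient_add_finrank
    have h2 : Module.finrank F ↥H ≤ Module.finrank F V := H.finrank_le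
    omega
  let e : (V ⧸ H) ≃ₗ[F] F :=
    LinearEquiv.ofFinrankEq _ _ (by rw [hquot, Module.finrank_self])
  refine ⟨e.toLinearMap.comp H.mkQ, ?_⟩
  rw [LinearMap.ker_comp, LinearEquiv.ker, Submodule.comap_bot, Submodule.ker_mkQ]

lemma aux_smul_of_ker_eq (f g : V →ₗ[F] F) (hf : f ≠ 0)
    (h : LinearMap.ker g = LinearMap.ker f) : ∃ c : F, g = c • f := by
  obtain ⟨x, hx⟩ : ∃ x, f x ≠ 0 := by
    by_contra hc
    push_neg at hc
    exact hf (LinearMap.ext fun y => by simp [hc y])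
  refine ⟨g x / f x, LinearMap.ext fun y => ?_⟩
  have hz : y - (f y / f x) • x ∈ LinearMap.ker f := by
    simp [LinearMap.mem_ker, map_sub, map_smul, smul_eq_mul, div_mul_cancel₀ _ hx]
  rw [← h] at hz
  simp only [LinearMap.mem_ker, map_sub, map_smul, smul_eq_mul, sub_eq_zero] at hz
  simp only [LinearMap.smul_apply, smul_eq_mul]
  rw [hz]
  field_simp

lemma aux_ker_hyperplane [FiniteDimensional F V] (f : V →ₗ[F] F) (hf : f ≠ 0) :
    Module.finrank F ↥(LinearMap.ker f) = Module.finrank F V - 1 := by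
  obtain ⟨x, hx⟩ : ∃ x, f x ≠ 0 := by
    by_contra hc
    push_neg at hc
    exact hf (LinearMap.ext fun y => by simp [hc y])
  have hsurj : LinearMap.range f = ⊤ := by
    rw [LinearMap.range_eq_top]
    intro y
    exact ⟨(y / f x) • x, by rw [map_smul, smul_eq_mul, div_mul_cancel₀ _ hx]⟩
  have h1 := f.finrank_range_add_finrank_ker
  rw [hsurj, finrank_top, Module.finrank_self] at h1
  omega

lemma aux_sum_modEq {α : Type} (s : Finset α) (f : α → ℕ) (c m : ℕ)
    (h : ∀ a ∈ s, f a ≡ c [MOD m]) :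
    (∑ a ∈ s, f a) ≡ s.card * c [MOD m] := by
  classical
  revert h
  induction s using Finset.induction_on with
  | empty => intro _; simp [Nat.ModEq.refl]
  | @insert a s' ha ih =>
    intro h
    rw [Finset.sum_insert ha, Finset.card_insert_of_notMem ha]
    have h1 : f a ≡ c [MOD m] := h a (Finset.mem_insert_self a s')
    have h2 : (∑ x ∈ s', f x) ≡ s'.card * c [MOD m] :=
      ih (fun b hb => h b (Finset.mem_insert_of_mem hb))
    calc f a + ∑ x ∈ s', f x ≡ c + s'.card * c [MOD m] := h1.add h2
      _ = (s'.card + 1) * c := by ring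

/-- The key count: the number of hyperplanes containing a subspace `S`,
multiplied by `q - 1`, equals `q ^ codim S - 1`. -/
lemma aux_hyps_card [Fintype F] [Finite V] [FiniteDimensional F V]
    (hV : 1 ≤ Module.finrank F V) (S : Submodule F V) :
    (Finset.univ.filter (fun H : Submodule F V => IsHyperplane H ∧ S ≤ H)).card
      * (Fintype.card F - 1)
    = Fintype.card F ^ (Module.finrank F V - Module.finrank F ↥S) - 1 := by
  classical
  haveI : Fintype V := Fintype.ofFinite V
  haveI : Finite (V →ₗ[F] F) :=
    Finite.of_injective (fun f => (f : V → F)) DFunLike.coe_injective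
  haveI : Fintype (V →ₗ[F] F) := Fintype.ofFinite _
  set q := Fintype.card F with hqdef
  set n := Module.finrank F V with hndef
  set A : Submodule F (V →ₗ[F] F) := S.dualAnnihilator with hAdef
  set A₀ : Finset (V →ₗ[F] F) := Finset.univ.filter (fun f => f ∈ A ∧ f ≠ 0) with hA0def
  set Hyps : Finset (Submodule F V) :=
    Finset.univ.filter (fun H : Submodule F V => IsHyperplane H ∧ S ≤ H) with hHdef
  -- cardinality of A₀
  have hAcard : Fintype.card ↥A = q ^ (n - Module.finrank F ↥S) := by
    rw [Module.card_eq_pow_finrank (K := F)]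
    congr 1
    have e : Module.finrank F (V ⧸ S) = Module.finrank F ↥A :=
      LinearEquiv.finrank_eq (Subspace.quotEquivAnnihilator S)
    have h1 := S.finrank_quotient_add_finrank
    have h2 : Module.finrank F ↥S ≤ n := S.finrank_le
    omega
  have hA0card : A₀.card = q ^ (n - Module.finrank F ↥S) - 1 := by
    have h1 : A₀ = (Finset.univ.filter (fun f : V →ₗ[F] F => f ∈ A)).erase 0 := by
      ext f
      simp only [hA0def, Finset.mem_filter, Finset.mem_erase, Finset.mem_univ, true_and]
      tauto
    have h2 : (Finset.univ.filter (fun f : V →ₗ[F] F => f ∈ A)).card = Fintype.card ↥A := by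
      rw [Fintype.card_subtype]
    rw [h1, Finset.card_erase_of_mem, h2, hAcard]
    simp only [Finset.mem_filter, Finset.mem_univ, true_and]
    exact A.zero_mem
  -- fiberwise count over kernels
  have hmaps : ∀ f ∈ A₀, LinearMap.ker f ∈ Hyps := by
    intro f hf
    simp only [hA0def, Finset.mem_filter, Finset.mem_univ, true_and] at hf
    obtain ⟨hfA, hf0⟩ := hf
    simp only [hHdef, Finset.mem_filter, Finset.mem_univ, true_and]
    refine ⟨aux_ker_hyperplane f hf0, ?_⟩
    intro x hx
    rw [LinearMap.mem_ker]
    exact (Submodule.mem_dualAnnihilator f).mp hfA x hx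
  have hfiber : ∀ H ∈ Hyps, (A₀.filter (fun f => LinearMap.ker f = H)).card = q - 1 := by
    intro H hH
    simp only [hHdef, Finset.mem_filter, Finset.mem_univ, true_and] at hH
    obtain ⟨hHhyp, hSH⟩ := hH
    obtain ⟨f₀, hf₀⟩ := aux_exists_ker_eq H hHhyp hV
    have hf₀0 : f₀ ≠ 0 := by
      intro h0
      rw [h0, LinearMap.ker_zero] at hf₀
      have : Module.finrank F ↥H = n := by rw [← hf₀]; exact finrank_top F V
      rw [IsHyperplane] at hHhyp
      omega
    have hcard : (Finset.univ.erase (0 : F)).card = q - 1 := by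
      rw [Finset.card_erase_of_mem (Finset.mem_univ _), Finset.card_univ]
    rw [← hcard]
    symm
    apply Finset.card_bij (fun c _ => c • f₀)
    · intro c hc
      simp only [Finset.mem_erase, Finset.mem_univ, and_true] at hc
      simp only [Finset.mem_filter, hA0def, Finset.mem_univ, true_and]
      refine ⟨⟨?_, ?_⟩, ?_⟩
      · apply A.smul_mem
        rw [hAdef, Submodule.mem_dualAnnihilator]
        intro w hw
        have : w ∈ LinearMap.ker f₀ := by rw [hf₀]; exact hSH hw
        exact this
      · intro h0
        rcases smul_eq_zero.mp h0 with h | h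
        · exact hc h
        · exact hf₀0 h
      · rw [LinearMap.ker_smul _ _ hc, hf₀]
    · intro c hc c' hc' hcc
      simp only [Finset.mem_erase, Finset.mem_univ, and_true] at hc hc'
      by_contra hne
      have : (c - c') • f₀ = 0 := (sub_smul c c' f₀).trans (by rw [hcc, sub_self])
      rcases smul_eq_zero.mp this with h | h
      · exact hne (sub_eq_zero.mp h)
      · exact hf₀0 h
    · intro g hg
      simp only [Finset.mem_filter, hA0def, Finset.mem_univ, true_and] at hg
      obtain ⟨⟨hgA, hg0⟩, hgker⟩ := hg
      obtain ⟨c, hc⟩ := aux_smul_of_ker_eq f₀ g hf₀0 (by rw [hgker, hf₀])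
      have hc0 : c ≠ 0 := by
        intro h0
        rw [h0, zero_smul] at hc
        exact hg0 hc
      exact ⟨c, by simp [hc0], hc.symm⟩
  have hfib := Finset.card_eq_sum_card_fiberwise hmaps
  rw [hA0card, Finset.sum_congr rfl hfiber, Finset.sum_const, smul_eq_mul] at hfib
  exact hfib.symm

end AuxLemmas

/-- Lemma 2.4: a `q^r`-divisible set of points is `q^(r-j)`-divisible on every subspace
of codimension `j`, for `0 ≤ j ≤ r`. -/
theorem heritable (F : Type) [Field F] [Fintype F] (q v r : ℕ)
    (hq : Fintype.card F = q) (hv : 2 ≤ v) (hr : 1 ≤ r)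
    (C : Finset (Submodule F (Fin v → F))) (hpts : IsPointSet C)
    (hdiv : DivisibleSet (q ^ r) C) :
    ∀ j : ℕ, j ≤ r → ∀ S : Submodule F (Fin v → F), Module.finrank F ↥S = v - j →
      interCard C S ≡ C.card [MOD q ^ (r - j)] := by
  classical
  intro j hj S hS
  set V := Fin v → F
  have hfinV : Module.finrank F V = v := Module.finrank_fin_fun F
  have hq2 : 2 ≤ q := hq ▸ Fintype.one_lt_card
  rcases Nat.eq_zero_or_pos j with hj0 | hj1
  · -- j = 0 : S = ⊤
    subst hj0
    have hStop : S = ⊤ := Submodule.eq_top_of_finrank_eq (by rw [hS, hfinV]; omega)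
    subst hStop
    unfold interCard
    rw [Finset.filter_true_of_mem (fun P _ => le_top)]
  · -- j ≥ 1
    set n := Module.finrank F ↥S with hndef
    set d := v - n with hddef
    have hnv : n = v - j := hS
    have hd1 : 1 ≤ d := by omega
    have hdj : d ≤ j := by omega
    have hdr : d ≤ r := le_trans hdj hj
    have hVdim : 1 ≤ Module.finrank F V := by rw [hfinV]; omega
    set Hyps : Finset (Submodule F V) :=
      Finset.univ.filter (fun H : Submodule F V => IsHyperplane H ∧ S ≤ H) with hHdef
    set a := Hyps.card with hadef
    have ha : a * (q - 1) = q ^ d - 1 := by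
      have := aux_hyps_card hVdim S
      rwa [hq, hfinV, ← hndef, ← hddef, ← hHdef, ← hadef] at this
    -- inner counts
    have hcnt : ∀ P ∈ C, ¬ P ≤ S →
        (Hyps.filter (fun H => P ≤ H)).card * (q - 1) = q ^ (d - 1) - 1 := by
      intro P hP hPS
      have hP1 : Module.finrank F ↥P = 1 := hpts P hP
      have hPinf : P ⊓ S = ⊥ := by
        by_contra hne
        have hle : P ⊓ S ≤ P := inf_le_left
        have h1 : 1 ≤ Module.finrank F ↥(P ⊓ S) := by
          rw [Nat.one_le_iff_ne_zero]
          intro h0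
          exact hne (Submodule.finrank_eq_zero.mp h0)
        have : P ⊓ S = P := Submodule.eq_of_le_of_finrank_le hle (by omega)
        exact hPS (this ▸ inf_le_right)
      have hsup : Module.finrank F ↥(S ⊔ P) = n + 1 := by
        have := Submodule.finrank_sup_add_finrank_inf_eq S P
        rw [inf_comm] at hPinf
        rw [hPinf, finrank_bot] at this
        omega
      have hkey := aux_hyps_card hVdim (S ⊔ P)
      rw [hq, hfinV, hsup] at hkey
      have hveq : v - (n + 1) = d - 1 := by omega
      rw [hveq] at hkey
      have hset : Hyps.filter (fun H => P ≤ H)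
          = Finset.univ.filter (fun H : Submodule F V => IsHyperplane H ∧ S ⊔ P ≤ H) := by
        ext H
        simp only [hHdef, Finset.mem_filter, Finset.mem_univ, true_and, sup_le_iff]
        tauto
      rw [hset]
      exact hkey
    -- double counting
    set c := C.card with hcdef
    set s := interCard C S with hsdef
    have hsc : s ≤ c := Finset.card_filter_le _ _
    have hT : ∑ H ∈ Hyps, interCard C H = ∑ P ∈ C, (Hyps.filter (fun H => P ≤ H)).card := by
      unfold interCard
      simp only [Finset.card_filter]
      rw [Finset.sum_comm]
    -- congruence side
    have hTmod : (∑ H ∈ Hyps, interCard C H) ≡ a * c [MOD q ^ r] := by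
      apply aux_sum_modEq
      intro H hH
      simp only [hHdef, Finset.mem_filter, Finset.mem_univ, true_and] at hH
      exact hdiv H hH.1
    -- exact count side
    have hTcount : (∑ H ∈ Hyps, interCard C H) * (q - 1)
        = s * (q ^ d - 1) + (c - s) * (q ^ (d - 1) - 1) := by
      rw [hT, Finset.sum_mul]
      rw [← Finset.sum_filter_add_sum_filter_not C (fun P => P ≤ S)]
      congr 1
      · rw [Finset.sum_congr rfl (fun P hP => ?_)]
        · rw [Finset.sum_const, smul_eq_mul]
          rfl
        · simp only [Finset.mem_filter] at hP
          have : Hyps.filter (fun H => P ≤ H) = Hyps := by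
            apply Finset.filter_true_of_mem
            intro H hH
            simp only [hHdef, Finset.mem_filter, Finset.mem_univ, true_and] at hH
            exact le_trans hP.2 hH.2
          rw [this, ← ha]
      · rw [Finset.sum_congr rfl (fun P hP => ?_)]
        · rw [Finset.sum_const, smul_eq_mul]
          congr 1
          have hpart := Finset.card_filter_add_card_filter_not
            (s := C) (p := fun P => P ≤ S)
          have hs' : s = (C.filter (fun P => P ≤ S)).card := rfl
          have hc' : c = C.card := rfl
          omega
        · simp only [Finset.mem_filter] at hP
          exact hcnt P hP.1 hP.2
    -- now pass to integers
    rw [Nat.modEq_iff_dvd]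
    rw [Nat.modEq_iff_dvd] at hTmod
    have hqd1n : 1 ≤ q ^ d := Nat.one_le_pow _ _ (by omega)
    have hqd1n' : 1 ≤ q ^ (d - 1) := Nat.one_le_pow _ _ (by omega)
    have hq1 : 1 ≤ q := by omega
    have hTC : ((∑ H ∈ Hyps, interCard C H : ℕ) : ℤ) * ((q:ℤ) - 1)
        = (s:ℤ) * ((q:ℤ) ^ d - 1) + ((c:ℤ) - (s:ℤ)) * ((q:ℤ) ^ (d - 1) - 1) := by
      zify [hsc, hqd1n, hqd1n', hq1] at hTcount
      push_cast at hTcount ⊢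
      linarith [hTcount]
    have haZ : (a:ℤ) * ((q:ℤ) - 1) = (q:ℤ) ^ d - 1 := by
      zify [hqd1n, hq1] at ha
      linarith [ha]
    -- from hTmod : (q^r : ℤ) ∣ a*c - T
    have hdvd1 : ((q:ℤ) ^ r) ∣ ((c:ℤ) - (s:ℤ)) * ((q:ℤ) ^ (d - 1)) * ((q:ℤ) - 1) := by
      have h1 : ((q:ℤ) ^ r) ∣ ((a:ℤ) * (c:ℤ) - (∑ H ∈ Hyps, interCard C H : ℕ)) := by
        have := hTmod
        push_cast at this ⊢
        exact this
      have h2 : ((q:ℤ) ^ r) ∣ ((a:ℤ) * (c:ℤ) - (∑ H ∈ Hyps, interCard C H : ℕ)) * ((q:ℤ) - 1) :=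
        Dvd.dvd.mul_right h1 _
      have h3 : ((a:ℤ) * (c:ℤ) - (∑ H ∈ Hyps, interCard C H : ℕ)) * ((q:ℤ) - 1)
          = ((c:ℤ) - (s:ℤ)) * ((q:ℤ) ^ (d - 1)) * ((q:ℤ) - 1) := by
        have hd' : d - 1 + 1 = d := by omega
        have hpow : (q:ℤ) ^ d = (q:ℤ) ^ (d - 1) * (q:ℤ) := by
          rw [← pow_succ, hd']
        linear_combination (-(1:ℤ)) * hTC + (c:ℤ) * haZ + ((c:ℤ) - (s:ℤ)) * hpow
      rwa [h3] at h2
    -- remove the coprime factor (q - 1)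
    have hcop : IsCoprime ((q:ℤ) ^ r) ((q:ℤ) - 1) := by
      have h1 : IsCoprime ((q:ℤ)) ((q:ℤ) - 1) := by
        have : (q:ℤ) - ((q:ℤ) - 1) = 1 := by ring
        exact ⟨1, -1, by ring⟩
      exact h1.pow_left
    have hdvd2 : ((q:ℤ) ^ r) ∣ ((c:ℤ) - (s:ℤ)) * ((q:ℤ) ^ (d - 1)) :=
      hcop.dvd_of_dvd_mul_right hdvd1
    -- cancel q^(d-1)
    have hdvd3 : ((q:ℤ) ^ (r - (d - 1))) ∣ ((c:ℤ) - (s:ℤ)) := by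
      have hsplit : (q:ℤ) ^ r = (q:ℤ) ^ (d - 1) * (q:ℤ) ^ (r - (d - 1)) := by
        rw [← pow_add]
        congr 1
        omega
      rw [hsplit, mul_comm ((c:ℤ) - (s:ℤ)) _] at hdvd2
      have hq0 : ((q:ℤ) ^ (d - 1)) ≠ 0 := by positivity
      exact (mul_dvd_mul_iff_left hq0).mp hdvd2
    have hfinal : ((q:ℤ) ^ (r - j)) ∣ ((c:ℤ) - (s:ℤ)) := by
      refine dvd_trans ?_ hdvd3
      apply pow_dvd_pow
      omega
    exact_mod_cast hfinal
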